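/- Let b ≥ 2 be an integer, let h and N be positive integers with N ≥ h, and let ε > 0 be real. Then for all integers M ≥ 0 and a with 0 ≤ a < b^h, μ({x ∈ (0,1) : F(M, N, a·b^{−h}, (a+1)·b^{−h}, ({b^j x})_{j≥0}) > ε·√(hN)}) ≤ 2h·exp(−ε² / (2·b^{−h}(1 − b^{−h}) + (2/3)·ε·⌊N/h⌋^{−1/2})). -/

import Mathlib

open scoped Classical

open MeasureTheory


lemma floor_piece (b : ℕ) (hb : 1 ≤ b) (J k t : ℕ) (hk : k ≤ J) (x : ℝ)
    (hx : ((t : ℝ)) / (b : ℝ) ^ J ≤ x) (hx' : x < ((t : ℝ) + 1) / (b : ℝ) ^ J) :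
    ⌊(b : ℝ) ^ k * x⌋ = (t / b ^ (J - k) : ℕ) := by
  have hbR : (0 : ℝ) < (b : ℝ) := by exact_mod_cast Nat.lt_of_lt_of_le Nat.zero_lt_one hb
  have hm : (0 : ℝ) < (b : ℝ) ^ (J - k) := by positivity
  have hkpos : (0 : ℝ) < (b : ℝ) ^ k := by positivity
  have hBm : (b : ℝ) ^ J = (b : ℝ) ^ (J - k) * (b : ℝ) ^ k := by
    rw [← pow_add]; congr 1; omega
  have hmn : 0 < b ^ (J - k) := Nat.pow_pos (by omega)
  have hlow : ((t / b ^ (J - k) : ℕ) : ℝ) ≤ (b : ℝ) ^ k * x := by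
    calc ((t / b ^ (J - k) : ℕ) : ℝ) ≤ (t : ℝ) / ((b ^ (J - k) : ℕ) : ℝ) :=
          Nat.cast_div_le
      _ = (t : ℝ) / (b : ℝ) ^ (J - k) := by push_cast; ring
      _ ≤ (b : ℝ) ^ k * x := by
          rw [div_le_iff₀ hm]
          calc (t : ℝ) = ((t : ℝ) / (b : ℝ) ^ J) * (b : ℝ) ^ J := by field_simp
            _ ≤ x * (b : ℝ) ^ J := by
                apply mul_le_mul_of_nonneg_right hx (by positivity)
            _ = (b : ℝ) ^ k * x * (b : ℝ) ^ (J - k) := by rw [hBm]; ring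
  have hnat : t < (t / b ^ (J - k) + 1) * b ^ (J - k) := by
    have h1 := Nat.div_add_mod t (b ^ (J - k))
    have h2 := Nat.mod_lt t hmn
    rw [add_mul, one_mul, mul_comm]
    omega
  have hhigh : (b : ℝ) ^ k * x < ((t / b ^ (J - k) : ℕ) : ℝ) + 1 := by
    calc (b : ℝ) ^ k * x < (b : ℝ) ^ k * (((t : ℝ) + 1) / (b : ℝ) ^ J) :=
          mul_lt_mul_of_pos_left hx' hkpos
      _ = ((t : ℝ) + 1) / (b : ℝ) ^ (J - k) := by rw [hBm]; field_simp
      _ ≤ ((t / b ^ (J - k) : ℕ) : ℝ) + 1 := by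
          rw [div_le_iff₀ hm]
          have : ((t : ℝ) + 1) ≤ (((t / b ^ (J - k) + 1) * b ^ (J - k) : ℕ) : ℝ) := by
            exact_mod_cast hnat
          push_cast at this ⊢
          linarith
  rw [Int.floor_eq_iff]
  constructor
  · exact_mod_cast hlow
  · exact_mod_cast hhigh

lemma cond_piece (b h a : ℕ) (hb : 1 ≤ b) (J j t : ℕ) (hj : j + h ≤ J) (x : ℝ)
    (hx : ((t : ℝ)) / (b : ℝ) ^ J ≤ x) (hx' : x < ((t : ℝ) + 1) / (b : ℝ) ^ J) :
    (((a : ℝ) / (b : ℝ) ^ h ≤ Int.fract ((b : ℝ) ^ j * x) ∧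
        Int.fract ((b : ℝ) ^ j * x) < ((a : ℝ) + 1) / (b : ℝ) ^ h) ↔
      (t / b ^ (J - j - h)) % b ^ h = a) := by
  have hbR : (0 : ℝ) < (b : ℝ) := by exact_mod_cast Nat.lt_of_lt_of_le Nat.zero_lt_one hb
  have hBh : (0 : ℝ) < (b : ℝ) ^ h := by positivity
  set n2 : ℕ := t / b ^ (J - j - h) with hn2
  set n1 : ℕ := t / b ^ (J - j) with hn1
  have hf2 : ⌊(b : ℝ) ^ j * x⌋ = (n1 : ℤ) := floor_piece b hb J j t (by omega) x hx hx'
  have hf1 : ⌊(b : ℝ) ^ (j + h) * x⌋ = ((t / b ^ (J - (j + h)) : ℕ) : ℤ) :=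
    floor_piece b hb J (j + h) t hj x hx hx'
  have hJjh : J - (j + h) = J - j - h := by omega
  rw [hJjh, ← hn2] at hf1
  -- n1 = n2 / b^h
  have hdivdiv : n2 / b ^ h = n1 := by
    rw [hn2, hn1, Nat.div_div_eq_div_mul, ← pow_add]
    congr 2
    omega
  -- key : b^h * fract (b^j x) = b^(j+h) x - (b^h * n1 : ℕ)
  have key : (b : ℝ) ^ h * Int.fract ((b : ℝ) ^ j * x)
      = (b : ℝ) ^ (j + h) * x - ((b ^ h * n1 : ℕ) : ℝ) := by
    rw [Int.fract]
    rw [hf2]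
    push_cast
    rw [pow_add]
    ring
  have hfloor : ⌊(b : ℝ) ^ h * Int.fract ((b : ℝ) ^ j * x)⌋ = (n2 : ℤ) - (b ^ h * n1 : ℕ) := by
    rw [key, Int.floor_sub_natCast, hf1]
  have hmod : (n2 : ℤ) - (b ^ h * n1 : ℕ) = ((n2 % b ^ h : ℕ) : ℤ) := by
    have h1 := Nat.div_add_mod n2 (b ^ h)
    rw [hdivdiv] at h1
    push_cast
    push_cast at h1
    linarith
  rw [hmod] at hfloor
  constructor
  · rintro ⟨h1, h2⟩
    have hle : ((a : ℤ) : ℝ) ≤ (b : ℝ) ^ h * Int.fract ((b : ℝ) ^ j * x) := by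
      push_cast
      rw [div_le_iff₀ hBh] at h1
      linarith [h1]
    have hlt : (b : ℝ) ^ h * Int.fract ((b : ℝ) ^ j * x) < ((a : ℤ) : ℝ) + 1 := by
      push_cast
      rw [lt_div_iff₀ hBh] at h2
      linarith [h2]
    have : ⌊(b : ℝ) ^ h * Int.fract ((b : ℝ) ^ j * x)⌋ = (a : ℤ) :=
      Int.floor_eq_iff.mpr ⟨hle, hlt⟩
    rw [hfloor] at this
    exact_mod_cast this
  · intro hEq
    have : ⌊(b : ℝ) ^ h * Int.fract ((b : ℝ) ^ j * x)⌋ = (a : ℤ) := by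
      rw [hfloor]; exact_mod_cast hEq
    obtain ⟨hle, hlt⟩ := Int.floor_eq_iff.mp this
    push_cast at hle hlt
    constructor
    · rw [div_le_iff₀ hBh]; linarith
    · rw [lt_div_iff₀ hBh]; linarith

lemma sum_range_mul (f : ℕ → ℝ) (n m : ℕ) :
    ∑ t ∈ Finset.range (n * m), f t
      = ∑ q ∈ Finset.range n, ∑ s ∈ Finset.range m, f (m * q + s) := by
  induction n with
  | zero => simp
  | succ n ih =>
    rw [Finset.sum_range_succ, ← ih, Nat.succ_mul, Finset.range_eq_Ico,
      ← Finset.sum_Ico_consecutive f (Nat.zero_le (n * m)) (Nat.le_add_right (n * m) m)]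
    congr 1
    · rw [Finset.range_eq_Ico]
    rw [Finset.sum_Ico_eq_sum_range]
    simp only [Nat.add_sub_cancel_left, ← Finset.range_eq_Ico]
    apply Finset.sum_congr rfl
    intro s _
    congr 1
    ring

lemma comb (b h : ℕ) (hb : 1 ≤ b) (hh : 1 ≤ h) (w : ℕ → ℝ) :
    ∀ J, ∀ T : Finset ℕ, (∀ j ∈ T, j + h ≤ J) →
      (∀ j ∈ T, ∀ j' ∈ T, j < j' → j + h ≤ j') →
      ∑ t ∈ Finset.range (b ^ J), ∏ j ∈ T, w (t / b ^ (J - j - h) % b ^ h)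
        = (b : ℝ) ^ J * ((∑ d ∈ Finset.range (b ^ h), w d) / (b : ℝ) ^ h) ^ T.card := by
  intro J
  induction J using Nat.strong_induction_on with
  | _ J ih =>
    intro T hT hsep
    rcases T.eq_empty_or_nonempty with rfl | hne
    · simp
    have hbh : 0 < b ^ h := Nat.pow_pos (by omega)
    set jm := T.max' hne with hjm_def
    have hjm : jm ∈ T := T.max'_mem hne
    have hJpos : h ≤ J := le_trans (by omega) (hT jm hjm)
    by_cases hcase : jm + h = J
    · -- bottom block case
      have hJ : b ^ J = b ^ (J - h) * b ^ h := by rw [← pow_add]; congr 1; omega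
      rw [hJ, sum_range_mul]
      have step : ∀ q ∈ Finset.range (b ^ (J - h)), ∀ s ∈ Finset.range (b ^ h),
          ∏ j ∈ T, w ((b ^ h * q + s) / b ^ (J - j - h) % b ^ h)
            = w s * ∏ j ∈ T.erase jm, w (q / b ^ (J - h - j - h) % b ^ h) := by
        intro q hq s hs
        have hs' : s < b ^ h := Finset.mem_range.mp hs
        rw [← Finset.mul_prod_erase T _ hjm]
        congr 1
        · have h0 : J - jm - h = 0 := by omega
          rw [h0, pow_zero, Nat.div_one, Nat.mul_add_mod, Nat.mod_eq_of_lt hs']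
        · apply Finset.prod_congr rfl
          intro j hj
          have hjT := Finset.mem_of_mem_erase hj
          have hjne := Finset.ne_of_mem_erase hj
          have hlt : j < jm := lt_of_le_of_ne (T.le_max' j hjT) hjne
          have hgap : j + h ≤ jm := hsep j hjT jm hjm hlt
          have he : J - j - h = h + (J - h - j - h) := by omega
          rw [he, pow_add, ← Nat.div_div_eq_div_mul, Nat.mul_add_div hbh,
            Nat.div_eq_of_lt hs', Nat.add_zero]
      rw [Finset.sum_congr rfl fun q hq => Finset.sum_congr rfl fun s hs => step q hq s hs]
      have hrw : ∀ q : ℕ, ∑ s ∈ Finset.range (b ^ h),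
          (w s * ∏ j ∈ T.erase jm, w (q / b ^ (J - h - j - h) % b ^ h))
            = (∑ d ∈ Finset.range (b ^ h), w d)
              * ∏ j ∈ T.erase jm, w (q / b ^ (J - h - j - h) % b ^ h) := by
        intro q; rw [← Finset.sum_mul]
      rw [Finset.sum_congr rfl fun q _ => hrw q, ← Finset.mul_sum]
      have hIH := ih (J - h) (by omega) (T.erase jm)
        (fun j hj => by
          have hjT := Finset.mem_of_mem_erase hj
          have hjne := Finset.ne_of_mem_erase hj
          have hlt : j < jm := lt_of_le_of_ne (T.le_max' j hjT) hjne
          have := hsep j hjT jm hjm hlt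
          omega)
        (fun j hj j' hj' hlt =>
          hsep j (Finset.mem_of_mem_erase hj) j' (Finset.mem_of_mem_erase hj') hlt)
      rw [hIH, Finset.card_erase_of_mem hjm]
      have hcard : 1 ≤ T.card := Finset.card_pos.mpr hne
      have hbhR : ((b : ℝ) ^ h) ≠ 0 := by positivity
      set W := ∑ d ∈ Finset.range (b ^ h), w d
      have hpow : (b : ℝ) ^ J = (b : ℝ) ^ (J - h) * (b : ℝ) ^ h := by
        rw [← pow_add]; congr 1; omega
      have hcard' : T.card - 1 + 1 = T.card := by omega
      calc W * ((b : ℝ) ^ (J - h) * (W / (b : ℝ) ^ h) ^ (T.card - 1))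
          = (b : ℝ) ^ (J - h) * (b : ℝ) ^ h
            * ((W / (b : ℝ) ^ h) ^ (T.card - 1) * (W / (b : ℝ) ^ h)) := by
            field_simp
        _ = (b : ℝ) ^ J * (W / (b : ℝ) ^ h) ^ T.card := by
            rw [← hpow, ← pow_succ, hcard']
    · -- strip one digit case
      have hcase' : jm + h < J := lt_of_le_of_ne (hT jm hjm) hcase
      have hJ1 : 1 ≤ J := by omega
      have hJ : b ^ J = b ^ (J - 1) * b := by
        conv_lhs => rw [show J = (J - 1) + 1 by omega]
        rw [pow_succ]
      rw [hJ, sum_range_mul]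
      have step : ∀ q ∈ Finset.range (b ^ (J - 1)), ∀ s ∈ Finset.range b,
          ∏ j ∈ T, w ((b * q + s) / b ^ (J - j - h) % b ^ h)
            = ∏ j ∈ T, w (q / b ^ (J - 1 - j - h) % b ^ h) := by
        intro q hq s hs
        have hs' : s < b := Finset.mem_range.mp hs
        apply Finset.prod_congr rfl
        intro j hj
        have hjle : j ≤ jm := T.le_max' j hj
        have he : J - j - h = 1 + (J - 1 - j - h) := by omega
        rw [he, pow_add, pow_one, ← Nat.div_div_eq_div_mul, Nat.mul_add_div (by omega),
          Nat.div_eq_of_lt hs', Nat.add_zero]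
      rw [Finset.sum_congr rfl fun q hq => Finset.sum_congr rfl fun s hs => step q hq s hs]
      simp only [Finset.sum_const, Finset.card_range, nsmul_eq_mul]
      rw [← Finset.mul_sum]
      have hIH := ih (J - 1) (by omega) T
        (fun j hj => by have := hsep j hj jm hjm; have hjle : j ≤ jm := T.le_max' j hj; omega)
        hsep
      rw [hIH]
      have hpow : (b : ℝ) ^ J = (b : ℝ) ^ (J - 1) * b := by
        conv_lhs => rw [show J = (J - 1) + 1 by omega]
        rw [pow_succ]
      rw [hpow]
      ring

lemma integral_prod_le (b h a : ℕ) (hb : 1 ≤ b) (hh : 1 ≤ h) (ha : a < b ^ h)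
    (c₁ c₀ : ℝ) (h1 : 0 ≤ c₁) (h0 : 0 ≤ c₀) (T : Finset ℕ)
    (hsep : ∀ j ∈ T, ∀ j' ∈ T, j < j' → j + h ≤ j') :
    ∫⁻ x in Set.Ioo (0 : ℝ) 1, ENNReal.ofReal (∏ j ∈ T,
        if (a : ℝ) / (b : ℝ) ^ h ≤ Int.fract ((b : ℝ) ^ j * x) ∧
            Int.fract ((b : ℝ) ^ j * x) < ((a : ℝ) + 1) / (b : ℝ) ^ h
          then c₁ else c₀)
      ≤ ENNReal.ofReal ((((b : ℝ) ^ h)⁻¹ * c₁ + (1 - ((b : ℝ) ^ h)⁻¹) * c₀) ^ T.card) := by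
  set J := T.sup id + h with hJdef
  have hT : ∀ j ∈ T, j + h ≤ J := fun j hj => by
    have := Finset.le_sup (f := id) hj; simp at this; omega
  set B := b ^ J with hBdef
  have hBpos : 0 < B := Nat.pow_pos (by omega)
  have hBR : (0 : ℝ) < (B : ℕ) := by exact_mod_cast hBpos
  set w : ℕ → ℝ := fun d => if d = a then c₁ else c₀ with hw
  set g : ℕ → ℝ := fun t => ∏ j ∈ T, w (t / b ^ (J - j - h) % b ^ h) with hg
  have hgnn : ∀ t, 0 ≤ g t := by
    intro t
    apply Finset.prod_nonneg
    intro j _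
    by_cases hda : (t / b ^ (J - j - h) % b ^ h) = a <;> simp [hw, hda, h1, h0]
  set G : ℝ → ENNReal := fun x => ENNReal.ofReal (∏ j ∈ T,
      if (a : ℝ) / (b : ℝ) ^ h ≤ Int.fract ((b : ℝ) ^ j * x) ∧
          Int.fract ((b : ℝ) ^ j * x) < ((a : ℝ) + 1) / (b : ℝ) ^ h
        then c₁ else c₀) with hG
  have hpiece : ∀ t : ℕ, ∀ x ∈ Set.Ico ((t : ℝ) / (B : ℕ)) (((t : ℝ) + 1) / (B : ℕ)),
      G x = ENNReal.ofReal (g t) := by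
    intro t x hx
    have hx1 : ((t : ℝ)) / (b : ℝ) ^ J ≤ x := by
      have : ((B : ℕ) : ℝ) = (b : ℝ) ^ J := by rw [hBdef]; push_cast; ring
      rw [← this]; exact hx.1
    have hx2 : x < ((t : ℝ) + 1) / (b : ℝ) ^ J := by
      have : ((B : ℕ) : ℝ) = (b : ℝ) ^ J := by rw [hBdef]; push_cast; ring
      rw [← this]; exact hx.2
    have hprod : (∏ j ∈ T,
        if (a : ℝ) / (b : ℝ) ^ h ≤ Int.fract ((b : ℝ) ^ j * x) ∧
            Int.fract ((b : ℝ) ^ j * x) < ((a : ℝ) + 1) / (b : ℝ) ^ h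
          then c₁ else c₀) = g t := by
      simp only [hg, hw]
      apply Finset.prod_congr rfl
      intro j hj
      rw [if_congr (cond_piece b h a hb J j t (hT j hj) x hx1 hx2) rfl rfl]
    exact congrArg ENNReal.ofReal hprod
  -- covering
  have hsub : Set.Ioo (0 : ℝ) 1 ⊆
      ⋃ t : ℕ, (Set.Ico ((t : ℝ) / (B : ℕ)) (((t : ℝ) + 1) / (B : ℕ)) ∩ Set.Ioo 0 1) := by
    intro x hx
    have hx0 : 0 < x := hx.1
    have hx1 : x < 1 := hx.2
    set t : ℕ := ⌊(B : ℝ) * x⌋.toNat with ht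
    have hfl : (0 : ℤ) ≤ ⌊(B : ℝ) * x⌋ := Int.floor_nonneg.mpr (by positivity)
    have hteq : ((t : ℕ) : ℝ) = ((⌊(B : ℝ) * x⌋ : ℤ) : ℝ) := by
      rw [ht]
      exact_mod_cast (Int.toNat_of_nonneg hfl :
        ((⌊(B : ℝ) * x⌋.toNat : ℕ) : ℤ) = ⌊(B : ℝ) * x⌋)
    have htc : ((t : ℕ) : ℝ) ≤ (B : ℕ) * x := by
      rw [hteq]; exact Int.floor_le _
    have htc2 : (B : ℝ) * x < (t : ℝ) + 1 := by
      rw [hteq]; exact Int.lt_floor_add_one _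
    apply Set.mem_iUnion.mpr
    refine ⟨t, ⟨⟨?_, ?_⟩, hx⟩⟩
    · rw [div_le_iff₀ hBR]; linarith
    · rw [lt_div_iff₀ hBR]; linarith
  calc ∫⁻ x in Set.Ioo (0 : ℝ) 1, G x
      ≤ ∫⁻ x in ⋃ t : ℕ,
          (Set.Ico ((t : ℝ) / (B : ℕ)) (((t : ℝ) + 1) / (B : ℕ)) ∩ Set.Ioo 0 1), G x :=
        lintegral_mono_set hsub
    _ ≤ ∑' t : ℕ, ∫⁻ x in
          Set.Ico ((t : ℝ) / (B : ℕ)) (((t : ℝ) + 1) / (B : ℕ)) ∩ Set.Ioo 0 1, G x :=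
        lintegral_iUnion_le _ _
    _ = ∑ t ∈ Finset.range B, ∫⁻ x in
          Set.Ico ((t : ℝ) / (B : ℕ)) (((t : ℝ) + 1) / (B : ℕ)) ∩ Set.Ioo 0 1, G x := by
        apply tsum_eq_sum
        intro t ht
        have hBt : B ≤ t := by
          by_contra hc
          exact ht (Finset.mem_range.mpr (by omega))
        have : Set.Ico ((t : ℝ) / (B : ℕ)) (((t : ℝ) + 1) / (B : ℕ)) ∩ Set.Ioo 0 1 = ∅ := by
          ext y
          simp only [Set.mem_inter_iff, Set.mem_Ico, Set.mem_Ioo, Set.mem_empty_iff_false,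
            iff_false, not_and, and_imp]
          intro hy1 _ _ hy2
          have : (1 : ℝ) ≤ (t : ℝ) / (B : ℕ) := by
            rw [le_div_iff₀ hBR]
            have : (B : ℝ) ≤ (t : ℝ) := by exact_mod_cast hBt
            linarith
          linarith
        rw [this]
        simp
    _ ≤ ∑ t ∈ Finset.range B, ENNReal.ofReal (g t * (1 / (B : ℕ))) := by
        apply Finset.sum_le_sum
        intro t _
        calc ∫⁻ x in Set.Ico ((t : ℝ) / (B : ℕ)) (((t : ℝ) + 1) / (B : ℕ)) ∩ Set.Ioo 0 1, G x
            ≤ ∫⁻ x in Set.Ico ((t : ℝ) / (B : ℕ)) (((t : ℝ) + 1) / (B : ℕ)), G x :=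
              lintegral_mono_set Set.inter_subset_left
          _ = ∫⁻ _ in Set.Ico ((t : ℝ) / (B : ℕ)) (((t : ℝ) + 1) / (B : ℕ)),
                ENNReal.ofReal (g t) := by
              apply setLIntegral_congr_fun measurableSet_Ico
              exact fun x hx => hpiece t x hx
          _ = ENNReal.ofReal (g t) * volume (Set.Ico ((t : ℝ) / (B : ℕ)) (((t : ℝ) + 1) / (B : ℕ))) :=
              setLIntegral_const _ _
          _ = ENNReal.ofReal (g t * (1 / (B : ℕ))) := by
              rw [Real.volume_Ico, ENNReal.ofReal_mul (hgnn t)]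
              congr 2
              field_simp
              ring
    _ = ENNReal.ofReal (∑ t ∈ Finset.range B, g t * (1 / (B : ℕ))) :=
        (ENNReal.ofReal_sum_of_nonneg (fun t _ => by
          have := hgnn t
          positivity)).symm
    _ ≤ ENNReal.ofReal ((((b : ℝ) ^ h)⁻¹ * c₁ + (1 - ((b : ℝ) ^ h)⁻¹) * c₀) ^ T.card) := by
        apply ENNReal.ofReal_le_ofReal
        rw [← Finset.sum_mul, comb b h hb hh w J T hT hsep]
        have hW : (∑ d ∈ Finset.range (b ^ h), w d) = (b ^ h : ℝ) * c₀ + (c₁ - c₀) := by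
          have hwd : ∀ d, w d = c₀ + (if d = a then c₁ - c₀ else 0) := by
            intro d
            by_cases hda : d = a <;> simp [hw, hda]
          rw [Finset.sum_congr rfl fun d _ => hwd d, Finset.sum_add_distrib,
            Finset.sum_ite_eq' (Finset.range (b ^ h)) a (fun _ => c₁ - c₀),
            if_pos (Finset.mem_range.mpr ha)]
          simp
        rw [hW]
        have hbhR : (0 : ℝ) < (b : ℝ) ^ h := by positivity
        have hBJ : ((B : ℕ) : ℝ) = (b : ℝ) ^ J := by rw [hBdef]; push_cast; ring
        rw [hBJ]
        have heq : ((b ^ h : ℝ) * c₀ + (c₁ - c₀)) / (b : ℝ) ^ h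
            = ((b : ℝ) ^ h)⁻¹ * c₁ + (1 - ((b : ℝ) ^ h)⁻¹) * c₀ := by
          field_simp
          ring
        rw [heq]
        have hbJR : (0 : ℝ) < (b : ℝ) ^ J := by positivity
        rw [mul_comm ((b : ℝ) ^ J) _, mul_assoc]
        rw [mul_one_div, div_self (ne_of_gt hbJR), mul_one]

lemma bern_mgf (p u : ℝ) (hp0 : 0 ≤ p) (hp1 : p ≤ 1) (hu : 0 ≤ u) :
    p * Real.exp u + (1 - p) ≤ Real.exp (p * u + p * (1 - p) * (Real.exp u - 1 - u)) := by
  rcases eq_or_lt_of_le hp0 with hp0' | hp0'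
  · simp [← hp0']
  have hD : ∀ y : ℝ, 0 < 1 + p * (Real.exp y - 1) := by
    intro y
    have := Real.exp_pos y
    nlinarith
  set f : ℝ → ℝ := fun y => p * y + p * (1 - p) * (Real.exp y - 1 - y)
      - Real.log (1 + p * (Real.exp y - 1)) with hf
  have hder : ∀ y : ℝ, HasDerivAt f
      (p + p * (1 - p) * (Real.exp y - 1)
        - p * Real.exp y / (1 + p * (Real.exp y - 1))) y := by
    intro y
    have he : HasDerivAt Real.exp (Real.exp y) y := Real.hasDerivAt_exp y
    have h1 : HasDerivAt (fun y : ℝ => p * y) p y := by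
      simpa using (hasDerivAt_id y).const_mul p
    have h2 : HasDerivAt (fun y : ℝ => Real.exp y - 1 - y) (Real.exp y - 1) y := by
      exact (he.sub_const 1).sub (hasDerivAt_id y)
    have h3 : HasDerivAt (fun y : ℝ => p * (1 - p) * (Real.exp y - 1 - y))
        (p * (1 - p) * (Real.exp y - 1)) y := h2.const_mul _
    have h4 : HasDerivAt (fun y : ℝ => 1 + p * (Real.exp y - 1)) (p * Real.exp y) y := by
      simpa using ((he.sub_const 1).const_mul p).const_add 1
    have h5 : HasDerivAt (fun y : ℝ => Real.log (1 + p * (Real.exp y - 1)))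
        (p * Real.exp y / (1 + p * (Real.exp y - 1))) y := h4.log (hD y).ne'
    exact (h1.add h3).sub h5
  have hmono : Monotone f := by
    apply monotone_of_deriv_nonneg
    · intro y
      exact (hder y).differentiableAt
    · intro y
      rw [(hder y).deriv]
      have hEy := Real.exp_pos y
      have hDy := hD y
      have key : p + p * (1 - p) * (Real.exp y - 1)
          - p * Real.exp y / (1 + p * (Real.exp y - 1))
          = (p * p * (1 - p) * (Real.exp y - 1) ^ 2) / (1 + p * (Real.exp y - 1)) := by
        field_simp
        ring
      rw [key]
      apply div_nonneg
      · exact mul_nonneg (by nlinarith : (0 : ℝ) ≤ p * p * (1 - p)) (sq_nonneg _)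
      · linarith
  have hf0 : f 0 = 0 := by simp [hf]
  have hfu : 0 ≤ f u := by
    rw [← hf0]
    exact hmono hu
  rw [hf] at hfu
  simp only at hfu
  have hlog : Real.log (1 + p * (Real.exp u - 1))
      ≤ p * u + p * (1 - p) * (Real.exp u - 1 - u) := by linarith
  have : p * Real.exp u + (1 - p) = 1 + p * (Real.exp u - 1) := by ring
  rw [this, ← Real.exp_log (hD u)]
  exact Real.exp_le_exp.mpr hlog

lemma exp_sub_bound (u : ℝ) (hu0 : 0 ≤ u) (hu3 : u < 3) :
    Real.exp u - 1 - u ≤ u ^ 2 / (2 * (1 - u / 3)) := by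
  have hS : Summable (fun n => u ^ n / ((Nat.factorial n : ℕ) : ℝ)) := Real.summable_pow_div_factorial u
  have hsum : Real.exp u = ∑' n : ℕ, u ^ n / ((Nat.factorial n : ℕ) : ℝ) := by
    rw [Real.exp_eq_exp_ℝ, NormedSpace.exp_eq_tsum_div]
  have hS1 : Summable (fun n => u ^ (n + 1) / ((Nat.factorial (n+1) : ℕ) : ℝ)) := by
    exact_mod_cast (summable_nat_add_iff 1).mpr hS
  have hS2 : Summable (fun n => u ^ (n + 2) / ((Nat.factorial (n+2) : ℕ) : ℝ)) := by
    exact_mod_cast (summable_nat_add_iff 2).mpr hS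
  have hshift : Real.exp u = 1 + u + ∑' n : ℕ, u ^ (n + 2) / ((Nat.factorial (n+2) : ℕ) : ℝ) := by
    rw [hsum, hS.tsum_eq_zero_add, hS1.tsum_eq_zero_add]
    norm_num [Nat.factorial]
    ring
  have hfact : ∀ n : ℕ, 2 * 3 ^ n ≤ Nat.factorial (n + 2) := by
    intro n
    induction n with
    | zero => simp [Nat.factorial]
    | succ n ih =>
      have h3 : 3 ≤ n + 3 := by omega
      calc 2 * 3 ^ (n + 1) = 3 * (2 * 3 ^ n) := by ring
        _ ≤ 3 * Nat.factorial (n + 2) := by omega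
        _ ≤ (n + 3) * Nat.factorial (n + 2) := Nat.mul_le_mul_right _ h3
        _ = Nat.factorial (n + 3) := (Nat.factorial_succ (n + 2)).symm
  have hterm : ∀ n : ℕ, u ^ (n + 2) / ((Nat.factorial (n+2) : ℕ) : ℝ) ≤ u ^ 2 / 2 * (u / 3) ^ n := by
    intro n
    have h1 : u ^ 2 / 2 * (u / 3) ^ n = u ^ (n + 2) / (2 * 3 ^ n) := by
      rw [div_pow, pow_add]
      ring
    rw [h1]
    apply div_le_div_of_nonneg_left (by positivity) (by positivity)
    exact_mod_cast hfact n
  have hgeo : Summable (fun n : ℕ => u ^ 2 / 2 * (u / 3) ^ n) := by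
    apply Summable.mul_left
    apply summable_geometric_of_lt_one (by positivity) (by linarith)
  have hbound : ∑' n : ℕ, u ^ (n + 2) / ((Nat.factorial (n+2) : ℕ) : ℝ)
      ≤ ∑' n : ℕ, u ^ 2 / 2 * (u / 3) ^ n := Summable.tsum_le_tsum hterm hS2 hgeo
  have hgeosum : ∑' n : ℕ, u ^ 2 / 2 * (u / 3) ^ n = u ^ 2 / 2 * (1 - u / 3)⁻¹ := by
    rw [tsum_mul_left, tsum_geometric_of_lt_one (by positivity) (by linarith)]
  have h13 : (0 : ℝ) < 1 - u / 3 := by linarith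
  have hfin : u ^ 2 / 2 * (1 - u / 3)⁻¹ = u ^ 2 / (2 * (1 - u / 3)) := by
    field_simp
  rw [hshift]
  rw [hgeosum, hfin] at hbound
  linarith

lemma tail_bound (b h a M N : ℕ) (hb : 2 ≤ b) (hh : 1 ≤ h) (hN : 1 ≤ N) (ha : a < b ^ h)
    (θ : ℝ) (hθ : θ = 1 ∨ θ = -1) (u t : ℝ) (hu : 0 < u) (ht : 0 < t) :
    MeasureTheory.volume {x ∈ Set.Ioo (0 : ℝ) 1 |
        t < θ * ((((Finset.Ico M (M + N)).filter fun j =>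
            (a : ℝ) / (b : ℝ) ^ h ≤ Int.fract ((b : ℝ) ^ j * x) ∧
              Int.fract ((b : ℝ) ^ j * x) < ((a : ℝ) + 1) / (b : ℝ) ^ h).card : ℝ)
          - ((b : ℝ) ^ h)⁻¹ * N)}
      ≤ ENNReal.ofReal (Real.exp (((b : ℝ) ^ h)⁻¹ * (1 - ((b : ℝ) ^ h)⁻¹) * N / h
          * (Real.exp u - 1 - u) - u / h * t)) := by
  have hb1 : 1 ≤ b := by omega
  have hbhR : (1 : ℝ) < (b : ℝ) ^ h := by
    have : (1 : ℝ) < (b : ℝ) := by exact_mod_cast hb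
    exact one_lt_pow₀ this (by omega)
  set p : ℝ := ((b : ℝ) ^ h)⁻¹ with hp
  have hp0 : 0 < p := by rw [hp]; positivity
  have hp1 : p < 1 := by rw [hp]; exact inv_lt_one_of_one_lt₀ hbhR
  have hhR : (0 : ℝ) < (h : ℝ) := by exact_mod_cast hh
  -- indicators
  set Y : ℕ → ℝ → ℝ := fun j x =>
    if (a : ℝ) / (b : ℝ) ^ h ≤ Int.fract ((b : ℝ) ^ j * x) ∧
        Int.fract ((b : ℝ) ^ j * x) < ((a : ℝ) + 1) / (b : ℝ) ^ h then 1 else 0 with hY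
  set C : ℝ → ℝ := fun x => ∑ j ∈ Finset.Ico M (M + N), Y j x with hC
  have hcond_meas : ∀ j : ℕ, MeasurableSet {x : ℝ |
      (a : ℝ) / (b : ℝ) ^ h ≤ Int.fract ((b : ℝ) ^ j * x) ∧
        Int.fract ((b : ℝ) ^ j * x) < ((a : ℝ) + 1) / (b : ℝ) ^ h} := by
    intro j
    have hf : Measurable fun x : ℝ => Int.fract ((b : ℝ) ^ j * x) :=
      measurable_fract.comp (measurable_id.const_mul _)
    exact (measurableSet_le measurable_const hf).inter (measurableSet_lt hf measurable_const)
  have hYmeas : ∀ j : ℕ, Measurable (Y j) := by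
    intro j
    exact Measurable.ite (hcond_meas j) measurable_const measurable_const
  have hCmeas : Measurable C := by
    apply Finset.measurable_sum
    intro j _
    exact hYmeas j
  have hcard : ∀ x : ℝ, (((Finset.Ico M (M + N)).filter fun j =>
      (a : ℝ) / (b : ℝ) ^ h ≤ Int.fract ((b : ℝ) ^ j * x) ∧
        Int.fract ((b : ℝ) ^ j * x) < ((a : ℝ) + 1) / (b : ℝ) ^ h).card : ℝ) = C x := by
    intro x
    simp only [hC]
    simp only [hY]
    rw [Finset.card_filter]
    push_cast
    apply Finset.sum_congr rfl
    intro j _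
    by_cases hc : (a : ℝ) / (b : ℝ) ^ h ≤ Int.fract ((b : ℝ) ^ j * x) ∧
        Int.fract ((b : ℝ) ^ j * x) < ((a : ℝ) + 1) / (b : ℝ) ^ h <;> simp [hc]
  have hset : {x ∈ Set.Ioo (0 : ℝ) 1 |
        t < θ * ((((Finset.Ico M (M + N)).filter fun j =>
            (a : ℝ) / (b : ℝ) ^ h ≤ Int.fract ((b : ℝ) ^ j * x) ∧
              Int.fract ((b : ℝ) ^ j * x) < ((a : ℝ) + 1) / (b : ℝ) ^ h).card : ℝ)
          - p * N)}
      = {x ∈ Set.Ioo (0 : ℝ) 1 | t < θ * (C x - p * N)} := by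
    ext x
    simp only [Set.mem_setOf_eq, hcard]
  rw [hset]
  set E := {x ∈ Set.Ioo (0 : ℝ) 1 | t < θ * (C x - p * N)} with hE
  -- classes
  set T : ℕ → Finset ℕ := fun r => (Finset.Ico M (M + N)).filter fun j => j % h = r with hT
  set m : ℕ → ℕ := fun r => (T r).card with hm
  set S : ℕ → ℝ → ℝ := fun r x => ∑ j ∈ T r, Y j x with hS
  have hfiber : ∀ g : ℕ → ℝ, ∑ r ∈ Finset.range h, ∑ j ∈ T r, g j
      = ∑ j ∈ Finset.Ico M (M + N), g j := by
    intro g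
    exact Finset.sum_fiberwise_of_maps_to
      (fun j _ => Finset.mem_range.mpr (Nat.mod_lt j (by omega))) g
  have hCsum : ∀ x, C x = ∑ r ∈ Finset.range h, S r x :=
    fun x => (hfiber fun j => Y j x).symm
  have hNsum : (N : ℝ) = ∑ r ∈ Finset.range h, (m r : ℝ) := by
    have h1 := hfiber fun _ => (1 : ℝ)
    simp only [Finset.sum_const, nsmul_eq_mul, mul_one, Nat.card_Ico] at h1
    simp only [hm]
    rw [h1]
    congr 1
    omega
  -- the exponential integrand and its factors
  set f : ℕ → ℝ → ENNReal := fun r x =>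
    ENNReal.ofReal (Real.exp (u * θ * (S r x - p * m r))) with hf
  set G : ℝ → ENNReal := fun x =>
    ENNReal.ofReal (Real.exp (u / h * θ * (C x - p * N))) with hG
  have hSmeas : ∀ r, Measurable fun x => S r x := by
    intro r
    apply Finset.measurable_sum
    intro j _
    exact hYmeas j
  have hfmeas : ∀ r, Measurable (f r) := by
    intro r
    apply Measurable.ennreal_ofReal
    apply Real.measurable_exp.comp
    exact ((hSmeas r).sub_const _).const_mul _
  have hGmeas : Measurable G := by
    apply Measurable.ennreal_ofReal
    apply Real.measurable_exp.comp
    exact ((hCmeas.sub_const _).const_mul _)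
  -- Step 1 : Markov / Chernoff
  have step1 : volume E * ENNReal.ofReal (Real.exp (u / h * t))
      ≤ ∫⁻ x in Set.Ioo (0 : ℝ) 1, G x := by
    calc volume E * ENNReal.ofReal (Real.exp (u / h * t))
        = ∫⁻ _ in E, ENNReal.ofReal (Real.exp (u / h * t)) := by
          rw [setLIntegral_const, mul_comm]
      _ ≤ ∫⁻ x in E, G x := by
          apply setLIntegral_mono hGmeas
          intro x hx
          apply ENNReal.ofReal_le_ofReal
          apply Real.exp_le_exp.mpr
          have h2 : t ≤ θ * (C x - p * N) := le_of_lt hx.2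
          have huh : 0 ≤ u / h := by positivity
          calc u / h * t ≤ u / h * (θ * (C x - p * N)) := mul_le_mul_of_nonneg_left h2 huh
            _ = u / h * θ * (C x - p * N) := by ring
      _ ≤ ∫⁻ x in Set.Ioo (0 : ℝ) 1, G x := by
          apply lintegral_mono_set
          simp only [hE]
          exact Set.sep_subset _ _
  -- Step 2 : Hölder
  have hGprod : ∀ x, G x = ∏ r ∈ Finset.range h, (f r x) ^ (1 / (h : ℝ)) := by
    intro x
    have hfac : ∀ r, (f r x) ^ (1 / (h : ℝ))
        = ENNReal.ofReal (Real.exp (u * θ * (S r x - p * m r) * (1 / (h : ℝ)))) := by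
      intro r
      simp only [hf]
      rw [ENNReal.ofReal_rpow_of_pos (Real.exp_pos _)]
      rw [← Real.exp_mul]
    rw [Finset.prod_congr rfl fun r _ => hfac r]
    rw [← ENNReal.ofReal_prod_of_nonneg (fun r _ => (Real.exp_pos _).le)]
    rw [← Real.exp_sum]
    simp only [hG]
    congr 2
    have e1 : ∑ r ∈ Finset.range h, u * θ * (S r x - p * m r) * (1 / (h : ℝ))
        = (u * θ / h) * (∑ r ∈ Finset.range h, S r x)
          - (u * θ / h) * p * (∑ r ∈ Finset.range h, (m r : ℝ)) := by
      rw [Finset.mul_sum, Finset.mul_sum, ← Finset.sum_sub_distrib]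
      apply Finset.sum_congr rfl
      intro r _
      ring
    rw [e1, ← hCsum x, ← hNsum]
    ring
  have step2 : ∫⁻ x in Set.Ioo (0 : ℝ) 1, G x
      ≤ ∏ r ∈ Finset.range h, (∫⁻ x in Set.Ioo (0 : ℝ) 1, f r x) ^ (1 / (h : ℝ)) := by
    have := ENNReal.lintegral_prod_norm_pow_le (μ := volume.restrict (Set.Ioo (0 : ℝ) 1))
      (Finset.range h) (f := f) (fun r _ => (hfmeas r).aemeasurable)
      (p := fun _ => 1 / (h : ℝ))
      (by
        rw [Finset.sum_const, Finset.card_range, nsmul_eq_mul]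
        field_simp)
      (fun r _ => by positivity)
    calc ∫⁻ x in Set.Ioo (0 : ℝ) 1, G x
        = ∫⁻ x in Set.Ioo (0 : ℝ) 1, ∏ r ∈ Finset.range h, (f r x) ^ (1 / (h : ℝ)) := by
          apply lintegral_congr
          intro x
          exact hGprod x
      _ ≤ _ := this
  -- Step 3 : per-class bound
  have key : p * Real.exp (u * θ) + (1 - p)
      ≤ Real.exp (θ * p * u + p * (1 - p) * (Real.exp u - 1 - u)) := by
    rcases hθ with rfl | rfl
    · rw [mul_one]
      have := bern_mgf p u hp0.le hp1.le hu.le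
      calc p * Real.exp u + (1 - p)
          ≤ Real.exp (p * u + p * (1 - p) * (Real.exp u - 1 - u)) := this
        _ = Real.exp (1 * p * u + p * (1 - p) * (Real.exp u - 1 - u)) := by ring_nf
    · have h2 := bern_mgf (1 - p) u (by linarith) (by linarith) hu.le
      have h3 : (1 - p) * Real.exp u + p ≤ Real.exp ((1 - p) * u
          + (1 - p) * p * (Real.exp u - 1 - u)) := by
        have e : (1 - p) * u + (1 - p) * p * (Real.exp u - 1 - u)
            = (1 - p) * u + (1 - p) * (1 - (1 - p)) * (Real.exp u - 1 - u) := by ring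
        rw [e]
        have e2 : (1 - p) * Real.exp u + p = (1 - p) * Real.exp u + (1 - (1 - p)) := by ring
        rw [e2]
        exact h2
      have h4 := mul_le_mul_of_nonneg_right h3 (Real.exp_pos (-u)).le
      calc p * Real.exp (u * -1) + (1 - p)
          = ((1 - p) * Real.exp u + p) * Real.exp (-u) := by
            have e1 : Real.exp u * Real.exp (-u) = 1 := by
              rw [← Real.exp_add]; simp
            have e2 : u * -1 = -u := by ring
            rw [e2]
            linear_combination (p - 1) * e1
        _ ≤ Real.exp ((1 - p) * u + (1 - p) * p * (Real.exp u - 1 - u)) * Real.exp (-u) := h4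
        _ = Real.exp (-1 * p * u + p * (1 - p) * (Real.exp u - 1 - u)) := by
            rw [← Real.exp_add]
            congr 1
            ring
  have step3 : ∀ r ∈ Finset.range h, ∫⁻ x in Set.Ioo (0 : ℝ) 1, f r x
      ≤ ENNReal.ofReal (Real.exp (p * (1 - p) * (m r) * (Real.exp u - 1 - u))) := by
    intro r _
    have hsep : ∀ j ∈ T r, ∀ j' ∈ T r, j < j' → j + h ≤ j' := by
      intro j hj j' hj' hlt
      have hj1 : j % h = r := (Finset.mem_filter.mp hj).2
      have hj2 : j' % h = r := (Finset.mem_filter.mp hj').2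
      have hmodeq : j ≡ j' [MOD h] := by unfold Nat.ModEq; omega
      have hdvd : h ∣ j' - j := (Nat.modEq_iff_dvd' hlt.le).mp hmodeq
      have : h ≤ j' - j := Nat.le_of_dvd (by omega) hdvd
      omega
    have hrw : ∀ x, f r x = ENNReal.ofReal (Real.exp (-(u * θ * p * m r)))
        * ENNReal.ofReal (∏ j ∈ T r,
            if (a : ℝ) / (b : ℝ) ^ h ≤ Int.fract ((b : ℝ) ^ j * x) ∧
                Int.fract ((b : ℝ) ^ j * x) < ((a : ℝ) + 1) / (b : ℝ) ^ h
              then Real.exp (u * θ) else 1) := by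
      intro x
      rw [← ENNReal.ofReal_mul (Real.exp_pos _).le]
      simp only [hf]
      congr 1
      have hprod : (∏ j ∈ T r,
          if (a : ℝ) / (b : ℝ) ^ h ≤ Int.fract ((b : ℝ) ^ j * x) ∧
              Int.fract ((b : ℝ) ^ j * x) < ((a : ℝ) + 1) / (b : ℝ) ^ h
            then Real.exp (u * θ) else 1)
          = Real.exp (u * θ * S r x) := by
        simp only [hS]
        simp only [Finset.mul_sum]
        rw [Real.exp_sum]
        apply Finset.prod_congr rfl
        intro j hj
        by_cases hc : (a : ℝ) / (b : ℝ) ^ h ≤ Int.fract ((b : ℝ) ^ j * x) ∧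
            Int.fract ((b : ℝ) ^ j * x) < ((a : ℝ) + 1) / (b : ℝ) ^ h
        · simp [hY, hc]
        · simp [hY, hc]
      rw [hprod, ← Real.exp_add]
      congr 1
      ring
    calc ∫⁻ x in Set.Ioo (0 : ℝ) 1, f r x
        = ENNReal.ofReal (Real.exp (-(u * θ * p * m r)))
          * ∫⁻ x in Set.Ioo (0 : ℝ) 1, ENNReal.ofReal (∏ j ∈ T r,
              if (a : ℝ) / (b : ℝ) ^ h ≤ Int.fract ((b : ℝ) ^ j * x) ∧
                  Int.fract ((b : ℝ) ^ j * x) < ((a : ℝ) + 1) / (b : ℝ) ^ h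
                then Real.exp (u * θ) else 1) := by
          rw [← lintegral_const_mul' _ _ ENNReal.ofReal_ne_top]
          apply lintegral_congr
          intro x
          exact hrw x
      _ ≤ ENNReal.ofReal (Real.exp (-(u * θ * p * m r)))
          * ENNReal.ofReal ((p * Real.exp (u * θ) + (1 - p) * 1) ^ m r) := by
          apply mul_le_mul_right
          exact integral_prod_le b h a hb1 hh ha _ _ (Real.exp_pos _).le zero_le_one (T r) hsep
      _ ≤ ENNReal.ofReal (Real.exp (p * (1 - p) * (m r) * (Real.exp u - 1 - u))) := by
          rw [← ENNReal.ofReal_mul (Real.exp_pos _).le]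
          apply ENNReal.ofReal_le_ofReal
          have hbase : (0 : ℝ) ≤ p * Real.exp (u * θ) + (1 - p) * 1 := by
            have := (Real.exp_pos (u * θ)).le
            nlinarith
          have hpow : (p * Real.exp (u * θ) + (1 - p) * 1) ^ m r
              ≤ Real.exp ((θ * p * u + p * (1 - p) * (Real.exp u - 1 - u)) * m r) := by
            rw [mul_comm _ ((m r : ℝ)), Real.exp_nat_mul]
            apply pow_le_pow_left₀ hbase
            rw [mul_one]
            exact key
          calc Real.exp (-(u * θ * p * m r)) * (p * Real.exp (u * θ) + (1 - p) * 1) ^ m r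
              ≤ Real.exp (-(u * θ * p * m r))
                * Real.exp ((θ * p * u + p * (1 - p) * (Real.exp u - 1 - u)) * m r) := by
                apply mul_le_mul_of_nonneg_left hpow (Real.exp_pos _).le
            _ = Real.exp (p * (1 - p) * (m r) * (Real.exp u - 1 - u)) := by
                rw [← Real.exp_add]
                congr 1
                ring
  -- Step 4 : combine the product
  have step4 : ∏ r ∈ Finset.range h, (∫⁻ x in Set.Ioo (0 : ℝ) 1, f r x) ^ (1 / (h : ℝ))
      ≤ ENNReal.ofReal (Real.exp (p * (1 - p) * N / h * (Real.exp u - 1 - u))) := by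
    calc ∏ r ∈ Finset.range h, (∫⁻ x in Set.Ioo (0 : ℝ) 1, f r x) ^ (1 / (h : ℝ))
        ≤ ∏ r ∈ Finset.range h, (ENNReal.ofReal
            (Real.exp (p * (1 - p) * (m r) * (Real.exp u - 1 - u)))) ^ (1 / (h : ℝ)) := by
          apply Finset.prod_le_prod'
          intro r hr
          exact ENNReal.rpow_le_rpow (step3 r hr) (by positivity)
      _ = ∏ r ∈ Finset.range h, ENNReal.ofReal
            (Real.exp (p * (1 - p) * (m r) * (Real.exp u - 1 - u) * (1 / (h : ℝ)))) := by
          apply Finset.prod_congr rfl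
          intro r _
          rw [ENNReal.ofReal_rpow_of_pos (Real.exp_pos _), ← Real.exp_mul]
      _ = ENNReal.ofReal (Real.exp (p * (1 - p) * N / h * (Real.exp u - 1 - u))) := by
          rw [← ENNReal.ofReal_prod_of_nonneg (fun r _ => (Real.exp_pos _).le), ← Real.exp_sum]
          congr 2
          have e1 : ∑ r ∈ Finset.range h,
              p * (1 - p) * (m r : ℝ) * (Real.exp u - 1 - u) * (1 / (h : ℝ))
              = (p * (1 - p) * (Real.exp u - 1 - u) / h) * ∑ r ∈ Finset.range h, (m r : ℝ) := by
            rw [Finset.mul_sum]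
            apply Finset.sum_congr rfl
            intro r _
            ring
          rw [e1, ← hNsum]
          ring
  -- Step 5 : conclude
  have hc0 : ENNReal.ofReal (Real.exp (u / h * t)) ≠ 0 :=
    (ENNReal.ofReal_pos.mpr (Real.exp_pos _)).ne'
  rw [show Real.exp (p * (1 - p) * ↑N / ↑h * (Real.exp u - 1 - u) - u / ↑h * t)
      = Real.exp (p * (1 - p) * N / h * (Real.exp u - 1 - u)) / Real.exp (u / h * t) from
    Real.exp_sub _ _]
  rw [ENNReal.ofReal_div_of_pos (Real.exp_pos _)]
  rw [ENNReal.le_div_iff_mul_le (Or.inl hc0) (Or.inl ENNReal.ofReal_ne_top)]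
  exact le_trans step1 (le_trans step2 step4)

/-- `F M N α₁ α₂ x = |#{j : M ≤ j < M+N, α₁ ≤ x_j < α₂} − (α₂ − α₁)·N|`. -/
noncomputable def F (M N : ℕ) (α₁ α₂ : ℝ) (x : ℕ → ℝ) : ℝ :=
  |(((Finset.Ico M (M + N)).filter fun j => α₁ ≤ x j ∧ x j < α₂).card : ℝ) -
    (α₂ - α₁) * N|

/-- The sequence `({b^j x})_{j ≥ 0}` of fractional parts. -/
noncomputable def bseq (b : ℕ) (x : ℝ) : ℕ → ℝ := fun j => Int.fract ((b : ℝ) ^ j * x)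

set_option maxHeartbeats 1000000 in
theorem stmt2 (b h N : ℕ) (hb : 2 ≤ b) (hh : 1 ≤ h) (hN : h ≤ N)
    (ε : ℝ) (hε : 0 < ε) (M a : ℕ) (ha : a < b ^ h) :
    MeasureTheory.volume {x ∈ Set.Ioo (0 : ℝ) 1 |
        ε * Real.sqrt ((h : ℝ) * N) <
          F M N ((a : ℝ) / (b : ℝ) ^ h) (((a : ℝ) + 1) / (b : ℝ) ^ h) (bseq b x)} ≤
      ENNReal.ofReal (2 * h * Real.exp (-ε ^ 2 /
        (2 * ((b : ℝ) ^ h)⁻¹ * (1 - ((b : ℝ) ^ h)⁻¹) +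
          2 / 3 * ε / Real.sqrt ((N / h : ℕ) : ℝ)))) := by
  have hN1 : 1 ≤ N := le_trans hh hN
  have hhR : (0 : ℝ) < (h : ℝ) := by exact_mod_cast hh
  have hNR : (0 : ℝ) < (N : ℝ) := by exact_mod_cast hN1
  have hbhR : (1 : ℝ) < (b : ℝ) ^ h := by
    have : (1 : ℝ) < (b : ℝ) := by exact_mod_cast hb
    exact one_lt_pow₀ this (by omega)
  set p : ℝ := ((b : ℝ) ^ h)⁻¹ with hpdef
  have hp0 : 0 < p := by rw [hpdef]; positivity
  have hp1 : p < 1 := by rw [hpdef]; exact inv_lt_one_of_one_lt₀ hbhR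
  set t : ℝ := ε * Real.sqrt ((h : ℝ) * N) with htdef
  have hhN0 : (0 : ℝ) < (h : ℝ) * N := by positivity
  have hsq : (0 : ℝ) < Real.sqrt ((h : ℝ) * N) := Real.sqrt_pos.mpr hhN0
  have ht : 0 < t := by rw [htdef]; positivity
  set V : ℝ := p * (1 - p) * N with hVdef
  have hV : 0 < V := by
    rw [hVdef]
    apply mul_pos (mul_pos hp0 (by linarith)) hNR
  have hA : (0 : ℝ) < V + t / 3 := by linarith
  set u : ℝ := t / (V + t / 3) with hudef
  have hu : 0 < u := by rw [hudef]; positivity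
  have hu3 : u < 3 := by
    rw [hudef, div_lt_iff₀ hA]
    linarith
  -- the two tail bounds
  have htail1 := tail_bound b h a M N hb hh hN1 ha 1 (Or.inl rfl) u t hu ht
  have htail2 := tail_bound b h a M N hb hh hN1 ha (-1) (Or.inr rfl) u t hu ht
  -- set inclusion
  set A1 := {x ∈ Set.Ioo (0 : ℝ) 1 |
      t < 1 * ((((Finset.Ico M (M + N)).filter fun j =>
          (a : ℝ) / (b : ℝ) ^ h ≤ Int.fract ((b : ℝ) ^ j * x) ∧
            Int.fract ((b : ℝ) ^ j * x) < ((a : ℝ) + 1) / (b : ℝ) ^ h).card : ℝ)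
        - p * N)} with hA1
  set A2 := {x ∈ Set.Ioo (0 : ℝ) 1 |
      t < -1 * ((((Finset.Ico M (M + N)).filter fun j =>
          (a : ℝ) / (b : ℝ) ^ h ≤ Int.fract ((b : ℝ) ^ j * x) ∧
            Int.fract ((b : ℝ) ^ j * x) < ((a : ℝ) + 1) / (b : ℝ) ^ h).card : ℝ)
        - p * N)} with hA2
  have hdiff : ((a : ℝ) + 1) / (b : ℝ) ^ h - (a : ℝ) / (b : ℝ) ^ h = p := by
    rw [hpdef, div_sub_div_same]
    ring_nf
  have hsub : {x ∈ Set.Ioo (0 : ℝ) 1 |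
      ε * Real.sqrt ((h : ℝ) * N) <
        F M N ((a : ℝ) / (b : ℝ) ^ h) (((a : ℝ) + 1) / (b : ℝ) ^ h) (bseq b x)} ⊆ A1 ∪ A2 := by
    intro x hx
    obtain ⟨hxI, hxF⟩ := hx
    rw [F] at hxF
    simp only [bseq] at hxF
    rw [hdiff] at hxF
    rcases lt_abs.mp hxF with hcase | hcase
    · left
      exact ⟨hxI, by rw [one_mul]; exact hcase⟩
    · right
      refine ⟨hxI, ?_⟩
      rw [neg_one_mul]
      exact hcase
  -- numeric comparison
  set m : ℕ := N / h with hmdef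
  have hm1 : 1 ≤ m := by
    rw [hmdef]
    exact (Nat.one_le_div_iff (by omega)).mpr hN
  have hsm : (0 : ℝ) < Real.sqrt ((m : ℕ) : ℝ) :=
    Real.sqrt_pos.mpr (by exact_mod_cast hm1)
  set D : ℝ := 2 * p * (1 - p) + 2 / 3 * ε / Real.sqrt ((m : ℕ) : ℝ) with hDdef
  have hD : 0 < D := by
    rw [hDdef]
    have : 0 < 2 / 3 * ε / Real.sqrt ((m : ℕ) : ℝ) := by positivity
    nlinarith
  -- exponent bound
  have hw := exp_sub_bound u hu.le hu3
  have h13 : (0 : ℝ) < 1 - u / 3 := by linarith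
  have h13eq : 1 - u / 3 = V / (V + t / 3) := by
    rw [hudef]
    field_simp
    ring
  have hident : V * (u ^ 2 / (2 * (1 - u / 3))) - u * t = -(t ^ 2 / (2 * (V + t / 3))) := by
    rw [h13eq, hudef]
    field_simp
    ring
  have hexp1 : V / h * (Real.exp u - 1 - u) - u / h * t ≤ -(t ^ 2 / (2 * (V + t / 3))) / h := by
    have e1 : V / h * (Real.exp u - 1 - u) - u / h * t
        = (V * (Real.exp u - 1 - u) - u * t) / h := by ring
    have e2 : V * (Real.exp u - 1 - u) - u * t ≤ -(t ^ 2 / (2 * (V + t / 3))) := by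
      calc V * (Real.exp u - 1 - u) - u * t
          ≤ V * (u ^ 2 / (2 * (1 - u / 3))) - u * t := by
            have := mul_le_mul_of_nonneg_left hw hV.le
            linarith
        _ = -(t ^ 2 / (2 * (V + t / 3))) := hident
    rw [e1]
    exact (div_le_div_iff_of_pos_right hhR).mpr e2
  -- compare with -ε²/D
  have hsqsq : t ^ 2 = ε ^ 2 * ((h : ℝ) * N) := by
    rw [htdef, mul_pow, Real.sq_sqrt hhN0.le]
  have hmhN : ((m : ℕ) : ℝ) * ((h : ℝ) * N) ≤ (N : ℝ) * N := by
    have hnat : m * h * N ≤ N * N := Nat.mul_le_mul_right N (Nat.div_mul_le_self N h)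
    calc ((m : ℕ) : ℝ) * ((h : ℝ) * N) = ((m * h * N : ℕ) : ℝ) := by push_cast; ring
      _ ≤ ((N * N : ℕ) : ℝ) := by exact_mod_cast hnat
      _ = (N : ℝ) * N := by push_cast; ring
  have hkey : Real.sqrt ((m : ℕ) : ℝ) * Real.sqrt ((h : ℝ) * N) ≤ (N : ℝ) := by
    rw [← Real.sqrt_mul (by positivity) _]
    calc Real.sqrt (((m : ℕ) : ℝ) * ((h : ℝ) * N)) ≤ Real.sqrt ((N : ℝ) * N) :=
          Real.sqrt_le_sqrt hmhN
      _ = (N : ℝ) := Real.sqrt_mul_self hNR.le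
  have hDN : 2 * (V + t / 3) ≤ D * ((h : ℝ) * N) / h := by
    have e1 : D * ((h : ℝ) * N) / h = D * N := by field_simp
    rw [e1, hDdef, hVdef, htdef]
    have e2 : (2 * p * (1 - p) + 2 / 3 * ε / Real.sqrt ((m : ℕ) : ℝ)) * N
        = 2 * (p * (1 - p) * N) + 2 / 3 * ε * ((N : ℝ) / Real.sqrt ((m : ℕ) : ℝ)) := by
      ring
    rw [e2]
    have e3 : ε * Real.sqrt ((h : ℝ) * N) ≤ ε * ((N : ℝ) / Real.sqrt ((m : ℕ) : ℝ)) := by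
      apply mul_le_mul_of_nonneg_left _ hε.le
      rw [le_div_iff₀ hsm]
      calc Real.sqrt ((h : ℝ) * N) * Real.sqrt ((m : ℕ) : ℝ)
          = Real.sqrt ((m : ℕ) : ℝ) * Real.sqrt ((h : ℝ) * N) := by ring
        _ ≤ (N : ℝ) := hkey
    linarith
  have hcmp : -(t ^ 2 / (2 * (V + t / 3))) / h ≤ -ε ^ 2 / D := by
    have hden : (0 : ℝ) < 2 * (V + t / 3) := by linarith
    have e1 : -(t ^ 2 / (2 * (V + t / 3))) / h = -(t ^ 2 / (2 * (V + t / 3) * h)) := by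
      field_simp
    have e2 : -ε ^ 2 / D = -(ε ^ 2 / D) := by ring
    rw [e1, e2, neg_le_neg_iff]
    rw [div_le_div_iff₀ hD (by positivity)]
    calc ε ^ 2 * (2 * (V + t / 3) * h) ≤ ε ^ 2 * (D * ((h : ℝ) * N) / h * h) := by
          apply mul_le_mul_of_nonneg_left _ (by positivity)
          exact mul_le_mul_of_nonneg_right hDN hhR.le
      _ = t ^ 2 * D := by
          rw [hsqsq]
          field_simp
  have hXle : V / h * (Real.exp u - 1 - u) - u / h * t ≤ -ε ^ 2 / D :=
    le_trans hexp1 hcmp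
  -- put everything together
  calc MeasureTheory.volume {x ∈ Set.Ioo (0 : ℝ) 1 |
        ε * Real.sqrt ((h : ℝ) * N) <
          F M N ((a : ℝ) / (b : ℝ) ^ h) (((a : ℝ) + 1) / (b : ℝ) ^ h) (bseq b x)}
      ≤ MeasureTheory.volume (A1 ∪ A2) := measure_mono hsub
    _ ≤ MeasureTheory.volume A1 + MeasureTheory.volume A2 := measure_union_le _ _
    _ ≤ ENNReal.ofReal (Real.exp (p * (1 - p) * N / h * (Real.exp u - 1 - u) - u / h * t))
        + ENNReal.ofReal (Real.exp (p * (1 - p) * N / h * (Real.exp u - 1 - u) - u / h * t)) :=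
        add_le_add htail1 htail2
    _ = ENNReal.ofReal (2 * Real.exp (p * (1 - p) * N / h * (Real.exp u - 1 - u) - u / h * t)) := by
        rw [← ENNReal.ofReal_add (Real.exp_pos _).le (Real.exp_pos _).le]
        congr 1
        ring
    _ ≤ ENNReal.ofReal (2 * h * Real.exp (-ε ^ 2 / D)) := by
        apply ENNReal.ofReal_le_ofReal
        have hexp_mono : Real.exp (p * (1 - p) * N / h * (Real.exp u - 1 - u) - u / h * t)
            ≤ Real.exp (-ε ^ 2 / D) := by
          apply Real.exp_le_exp.mpr
          have : p * (1 - p) * N / h = V / h := by rw [hVdef]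
          rw [this]
          exact hXle
        have h2h : (2 : ℝ) ≤ 2 * h := by
          have : (1 : ℝ) ≤ (h : ℝ) := by exact_mod_cast hh
          linarith
        calc 2 * Real.exp (p * (1 - p) * N / h * (Real.exp u - 1 - u) - u / h * t)
            ≤ 2 * Real.exp (-ε ^ 2 / D) := by linarith [hexp_mono]
          _ ≤ 2 * h * Real.exp (-ε ^ 2 / D) := by
              have := (Real.exp_pos (-ε ^ 2 / D)).le
              nlinarith
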